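/- Let v = (v₁,…,v_r) ∈ (ℤ/2ℤ)^r, r ≥ 3. Then the stabilizer S(v) = {M ∈ GL_r(ℤ/2ℤ) : v·M = v} is generated by the elementary matrices X_{ij} (i ≠ j) with v_i = 0 together with the double elementary matrices X_{ik}·X_{jk} for pairwise distinct i,j,k with v_i = v_j = 1. -/

import Mathlib

/-- The elementary matrix `X i j` over `ℤ/2ℤ`: identity plus an extra 1 in position (i,j). -/
def X {r : ℕ} (i j : Fin r) (h : i ≠ j) : Matrix.SpecialLinearGroup (Fin r) (ZMod 2) :=
  ⟨Matrix.transvection i j 1, Matrix.det_transvection_of_ne i j h 1⟩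

/-- The stabilizer of the row vector `v` in `GL_r(ℤ/2ℤ)` under right multiplication. -/
def S {r : ℕ} (v : Fin r → ZMod 2) : Subgroup (GL (Fin r) (ZMod 2)) where
  carrier := {M | Matrix.vecMul v (M : Matrix (Fin r) (Fin r) (ZMod 2)) = v}
  one_mem' := by simp
  mul_mem' := by
    intro a b ha hb
    simp only [Set.mem_setOf_eq] at *
    rw [Units.val_mul, ← Matrix.vecMul_vecMul, ha, hb]
  inv_mem' := by
    intro a ha
    simp only [Set.mem_setOf_eq] at *
    conv_lhs => rw [← ha, Matrix.vecMul_vecMul, ← Units.val_mul, mul_inv_cancel,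
      Units.val_one, Matrix.vecMul_one]

namespace StabAux

open Matrix

variable {r : ℕ}

def T (x y : Fin r → ZMod 2) : Matrix (Fin r) (Fin r) (ZMod 2) := 1 + vecMulVec x y

lemma z2 (a : ZMod 2) : a + a = 0 := by revert a; decide

lemma madd_self (A : Matrix (Fin r) (Fin r) (ZMod 2)) : A + A = 0 := by
  ext i j; exact z2 _

lemma mul_vMV (A : Matrix (Fin r) (Fin r) (ZMod 2)) (x y : Fin r → ZMod 2) :
    A * vecMulVec x y = vecMulVec (A *ᵥ x) y := by
  ext i j
  simp [mul_apply, vecMulVec_apply, mulVec, dotProduct, Finset.sum_mul, mul_assoc]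

lemma vMV_mul (x y : Fin r → ZMod 2) (B : Matrix (Fin r) (Fin r) (ZMod 2)) :
    vecMulVec x y * B = vecMulVec x (y ᵥ* B) := by
  ext i j
  simp only [mul_apply, vecMulVec_apply, vecMul, dotProduct, Finset.mul_sum]
  exact Finset.sum_congr rfl fun k _ => by ring

lemma vecMul_vMV (y x' y' : Fin r → ZMod 2) :
    y ᵥ* vecMulVec x' y' = (y ⬝ᵥ x') • y' := by
  ext j
  simp only [vecMul, dotProduct, vecMulVec_apply, Pi.smul_apply, smul_eq_mul, Finset.sum_mul]
  exact Finset.sum_congr rfl fun k _ => by ring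

lemma mulVec_vMV (x y z : Fin r → ZMod 2) :
    vecMulVec x y *ᵥ z = (y ⬝ᵥ z) • x := by
  ext i
  simp only [mulVec, dotProduct, vecMulVec_apply, Pi.smul_apply, smul_eq_mul, Finset.sum_mul]
  exact Finset.sum_congr rfl fun k _ => by ring

lemma vMV_vMV (x y x' y' : Fin r → ZMod 2) :
    vecMulVec x y * vecMulVec x' y' = (y ⬝ᵥ x') • vecMulVec x y' := by
  rw [vMV_mul, vecMul_vMV]
  ext i j
  simp [vecMulVec_apply, smul_eq_mul]; ring

lemma add_vMV (x x' y : Fin r → ZMod 2) :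
    vecMulVec (x + x') y = vecMulVec x y + vecMulVec x' y := by
  ext i j; simp [vecMulVec_apply, add_mul]

lemma vMV_add (x y y' : Fin r → ZMod 2) :
    vecMulVec x (y + y') = vecMulVec x y + vecMulVec x y' := by
  ext i j; simp [vecMulVec_apply, mul_add]

lemma T_mul_T (x y x' y' : Fin r → ZMod 2) (h : y ⬝ᵥ x' = 0) :
    T x y * T x' y' = 1 + vecMulVec x y + vecMulVec x' y' := by
  simp only [T, add_mul, mul_add, one_mul, mul_one, vMV_vMV, h, zero_smul]
  abel

lemma Tx_add (x x' y : Fin r → ZMod 2) (h : y ⬝ᵥ x' = 0) :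
    T x y * T x' y = T (x + x') y := by
  rw [T_mul_T _ _ _ _ h, T, add_vMV, add_assoc]

lemma Ty_add (x y y' : Fin r → ZMod 2) (h : y ⬝ᵥ x = 0) :
    T x y * T x y' = T x (y + y') := by
  rw [T_mul_T _ _ _ _ h, T, vMV_add, add_assoc]

lemma T_zero_left (y : Fin r → ZMod 2) : T 0 y = 1 := by
  simp [T]

lemma T_zero_right (x : Fin r → ZMod 2) : T x 0 = 1 := by
  simp [T]

lemma T_sq (x y : Fin r → ZMod 2) (h : y ⬝ᵥ x = 0) : T x y * T x y = 1 := by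
  rw [T_mul_T _ _ _ _ h, add_assoc, madd_self, add_zero]

lemma T_mulVec (u w x : Fin r → ZMod 2) : T u w *ᵥ x = x + (w ⬝ᵥ x) • u := by
  rw [T, add_mulVec, one_mulVec, mulVec_vMV]

lemma vecMul_T (y u w : Fin r → ZMod 2) : y ᵥ* T u w = y + (y ⬝ᵥ u) • w := by
  rw [T, vecMul_add, vecMul_one, vecMul_vMV]

lemma conj_T (u w x y : Fin r → ZMod 2) (huw : w ⬝ᵥ u = 0) :
    T u w * T x y * T u w = T (x + (w ⬝ᵥ x) • u) (y + (y ⬝ᵥ u) • w) := by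
  have : T u w * T x y * T u w = T u w * T u w + T u w * vecMulVec x y * T u w := by
    simp only [T]; noncomm_ring
  rw [this, T_sq _ _ huw, mul_vMV, vMV_mul, ← T, ← T_mulVec, ← vecMul_T]



def e (i : Fin r) : Fin r → ZMod 2 := Pi.single i 1

lemma e_dot (i : Fin r) (y : Fin r → ZMod 2) : e i ⬝ᵥ y = y i := by
  rw [e, single_dotProduct, one_mul]

lemma dot_e (y : Fin r → ZMod 2) (i : Fin r) : y ⬝ᵥ e i = y i := by
  rw [e, dotProduct_single, mul_one]

lemma e_app_self (i : Fin r) : e i i = 1 := Pi.single_eq_same i 1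

lemma e_app_ne {i j : Fin r} (h : j ≠ i) : e i j = 0 := Pi.single_eq_of_ne h 1

lemma e_app (i j : Fin r) : e i j = if j = i then 1 else 0 := Pi.single_apply i 1 j

def gens (v : Fin r → ZMod 2) : Set (GL (Fin r) (ZMod 2)) :=
  {A | ∃ i j : Fin r, ∃ h : i ≠ j, v i = 0 ∧ A = (X i j h).toGL} ∪
  {A | ∃ i j k : Fin r, ∃ hik : i ≠ k, ∃ hjk : j ≠ k, i ≠ j ∧ v i = 1 ∧ v j = 1 ∧
    A = (X i k hik * X j k hjk).toGL}

def H (v : Fin r → ZMod 2) : Subgroup (GL (Fin r) (ZMod 2)) := Subgroup.closure (gens v)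

def InH (v : Fin r → ZMod 2) (A : Matrix (Fin r) (Fin r) (ZMod 2)) : Prop :=
  ∃ U : GL (Fin r) (ZMod 2), U ∈ H v ∧ (U : Matrix (Fin r) (Fin r) (ZMod 2)) = A

lemma InH.mul {v : Fin r → ZMod 2} {A B : Matrix (Fin r) (Fin r) (ZMod 2)}
    (hA : InH v A) (hB : InH v B) : InH v (A * B) := by
  obtain ⟨UA, hUA, hA⟩ := hA
  obtain ⟨UB, hUB, hB⟩ := hB
  exact ⟨UA * UB, mul_mem hUA hUB, by rw [Units.val_mul, hA, hB]⟩

lemma InH.one {v : Fin r → ZMod 2} : InH v (1 : Matrix (Fin r) (Fin r) (ZMod 2)) :=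
  ⟨1, one_mem _, rfl⟩

lemma InH_X {v : Fin r → ZMod 2} {i j : Fin r} (hij : i ≠ j) (hv : v i = 0) :
    InH v (T (e i) (e j)) := by
  refine ⟨(X i j hij).toGL, Subgroup.subset_closure (Or.inl ⟨i, j, hij, hv, rfl⟩), ?_⟩
  show (X i j hij : Matrix (Fin r) (Fin r) (ZMod 2)) = _
  show Matrix.transvection i j 1 = _
  rw [Matrix.transvection, T, single_eq_single_vecMulVec_single, e, e]

lemma InH_D {v : Fin r → ZMod 2} {i j k : Fin r} (hij : i ≠ j) (hik : i ≠ k) (hjk : j ≠ k)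
    (hvi : v i = 1) (hvj : v j = 1) : InH v (T (e i + e j) (e k)) := by
  refine ⟨(X i k hik * X j k hjk).toGL, Subgroup.subset_closure
    (Or.inr ⟨i, j, k, hik, hjk, hij, hvi, hvj, rfl⟩), ?_⟩
  show ((X i k hik * X j k hjk : Matrix.SpecialLinearGroup (Fin r) (ZMod 2)) :
    Matrix (Fin r) (Fin r) (ZMod 2)) = _
  rw [Matrix.SpecialLinearGroup.coe_mul]
  show Matrix.transvection i k 1 * Matrix.transvection j k 1 = _
  have h1 : Matrix.transvection i k (1 : ZMod 2) = T (e i) (e k) := by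
    rw [Matrix.transvection, T, single_eq_single_vecMulVec_single, e, e]
  have h2 : Matrix.transvection j k (1 : ZMod 2) = T (e j) (e k) := by
    rw [Matrix.transvection, T, single_eq_single_vecMulVec_single, e, e]
  rw [h1, h2, Tx_add]
  rw [e_dot, e_app_ne hjk.symm]

lemma z2' {a : ZMod 2} (h : a ≠ 0) : a = 1 := by revert a; decide

lemma e_add_self (k : Fin r) : e k + e k = (0 : Fin r → ZMod 2) :=
  funext fun a => z2 _

lemma InH_offpart {v : Fin r → ZMod 2} {x₀ : Fin r → ZMod 2} :
    ∀ n (z : Fin r → ZMod 2), (Finset.univ.filter fun m => z m ≠ 0).card ≤ n →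
    (∀ m, z m ≠ 0 → x₀ m = 0 ∧ InH v (T x₀ (e m))) → InH v (T x₀ z) := by
  intro n
  induction n with
  | zero =>
    intro z hcard hz
    have hz0 : z = 0 := by
      funext m
      show z m = 0
      by_contra hm
      have : m ∈ Finset.univ.filter fun m => z m ≠ 0 := by simp [hm]
      have := Finset.card_pos.mpr ⟨m, this⟩
      omega
    rw [hz0, T_zero_right]; exact InH.one
  | succ n IH =>
    intro z hcard hz
    by_cases h0 : z = 0
    · rw [h0, T_zero_right]; exact InH.one
    · obtain ⟨m, hm⟩ : ∃ m, z m ≠ 0 := Function.ne_iff.mp h0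
      set z' := Function.update z m 0 with hz'
      have hsplit : z = e m + z' := by
        funext a
        by_cases ha : a = m
        · subst ha
          simp [hz', e_app_self, Function.update_self, z2' hm]
        · simp [hz', e_app_ne ha, Function.update_of_ne ha]
      have hfilter : (Finset.univ.filter fun a => z' a ≠ 0) =
          (Finset.univ.filter fun a => z a ≠ 0).erase m := by
        ext a
        by_cases ha : a = m
        · subst ha; simp [hz']
        · simp [hz', Function.update_of_ne ha, ha]
      have hcard' : (Finset.univ.filter fun a => z' a ≠ 0).card ≤ n := by
        rw [hfilter]
        have hmem : m ∈ Finset.univ.filter fun a => z a ≠ 0 := by simp [hm]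
        have := Finset.card_erase_of_mem hmem
        omega
      have hz'' : ∀ a, z' a ≠ 0 → x₀ a = 0 ∧ InH v (T x₀ (e a)) := by
        intro a ha
        by_cases ham : a = m
        · subst ham; simp [hz'] at ha
        · exact hz a (by rwa [hz', Function.update_of_ne ham] at ha)
      rw [hsplit, ← Ty_add _ _ _ (by rw [e_dot]; exact (hz m hm).1)]
      exact InH.mul (hz m hm).2 (IH z' hcard' hz'')

lemma exists_third (hr : 3 ≤ r) (i j : Fin r) : ∃ k : Fin r, k ≠ i ∧ k ≠ j := by
  have h2 : ({i, j} : Finset (Fin r)).card ≤ 2 :=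
    (Finset.card_insert_le i {j}).trans (by simp)
  have h3 : (Finset.univ : Finset (Fin r)).card = r := by simp
  have : 0 < ((Finset.univ : Finset (Fin r)) \ {i, j}).card := by
    have := Finset.le_card_sdiff ({i, j} : Finset (Fin r)) Finset.univ
    omega
  obtain ⟨k, hk⟩ := Finset.card_pos.mp this
  simp only [Finset.mem_sdiff, Finset.mem_insert, Finset.mem_singleton] at hk
  exact ⟨k, fun h => hk.2 (Or.inl h), fun h => hk.2 (Or.inr h)⟩

lemma InH_swap_free {v : Fin r → ZMod 2} {i j : Fin r} (hij : i ≠ j)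
    (hvi : v i = 0) (hvj : v j = 0) : InH v (T (e i + e j) (e i + e j)) := by
  have key := conj_T (e i) (e j) (e j) (e i) (by rw [e_dot]; simp [e_app, hij, hij.symm])
  have h1 : e j ⬝ᵥ e j = 1 := by rw [e_dot, e_app_self]
  have h2 : e i ⬝ᵥ e i = 1 := by rw [e_dot, e_app_self]
  rw [h1, h2, one_smul, one_smul] at key
  have : e j + e i = e i + e j := add_comm _ _
  rw [this] at key
  rw [← key]
  exact (InH.mul (InH.mul (InH_X hij hvi) (InH_X hij.symm hvj)) (InH_X hij hvi))

lemma InH_swap_pinned (hr : 3 ≤ r) {v : Fin r → ZMod 2} {i j : Fin r} (hij : i ≠ j)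
    (hvi : v i = 1) (hvj : v j = 1) : InH v (T (e i + e j) (e i + e j)) := by
  obtain ⟨k, hki, hkj⟩ := exists_third hr i j
  by_cases hvk : v k = 0
  · -- k is free
    -- M3 = X_{kj} D_{ij,k} X_{kj} = T (e i + e j + e k) (e j + e k)
    have hD : InH v (T (e i + e j) (e k)) := InH_D hij hki.symm hkj.symm hvi hvj
    have hXkj : InH v (T (e k) (e j)) := InH_X hkj hvk
    have hXki : InH v (T (e k) (e i)) := InH_X hki hvk
    have c1 := conj_T (e k) (e j) (e i + e j) (e k)
      (by rw [e_dot]; simp [e_app, hkj, hkj.symm])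
    have h1 : e j ⬝ᵥ (e i + e j) = 1 := by
      rw [e_dot]; simp [e_app, hij, hij.symm]
    have h2 : e k ⬝ᵥ e k = 1 := by rw [e_dot, e_app_self]
    rw [h1, h2, one_smul, one_smul] at c1
    -- c1 : Xkj * D * Xkj = T (e i + e j + e k) (e k + e j)
    have hM3 : InH v (T (e i + e j + e k) (e k + e j)) := by
      rw [← c1]; exact InH.mul (InH.mul hXkj hD) hXkj
    have c2 := conj_T (e k) (e i) (e i + e j + e k) (e k + e j)
      (by rw [e_dot]; simp [e_app, hki, hki.symm])
    have h3 : e i ⬝ᵥ (e i + e j + e k) = 1 := by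
      rw [e_dot]; simp [e_app, hij, hij.symm, hki, hki.symm]
    have h4 : (e k + e j) ⬝ᵥ e k = 1 := by
      rw [dot_e]; simp [e_app, hkj, hkj.symm]
    rw [h3, h4, one_smul, one_smul] at c2
    have hv1 : e i + e j + e k + e k = e i + e j := by
      rw [add_assoc, e_add_self, add_zero]
    have hv2 : e k + e j + e i = e k + (e i + e j) := by abel
    rw [hv1, hv2] at c2
    have hbig : InH v (T (e i + e j) (e k + (e i + e j))) := by
      rw [← c2]; exact InH.mul (InH.mul hXki hM3) hXki
    have := InH.mul hD hbig
    rw [Ty_add _ _ _ (by rw [e_dot]; simp [e_app, hki, hki.symm, hkj, hkj.symm])] at this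
    rw [← add_assoc, e_add_self, zero_add] at this
    exact this
  · -- k is pinned
    have hvk' : v k = 1 := z2' hvk
    have hD1 : InH v (T (e i + e k) (e j)) := InH_D hki.symm hij hkj hvi hvk'
    have hD2 : InH v (T (e j + e k) (e i)) := InH_D hkj.symm hij.symm hki hvj hvk'
    have c := conj_T (e i + e k) (e j) (e j + e k) (e i)
      (by rw [e_dot]; simp [e_app, hij, hij.symm, hkj, hkj.symm])
    have h1 : e j ⬝ᵥ (e j + e k) = 1 := by
      rw [e_dot]; simp [e_app, hkj, hkj.symm]
    have h2 : e i ⬝ᵥ (e i + e k) = 1 := by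
      rw [e_dot]; simp [e_app, hki, hki.symm]
    rw [h1, h2, one_smul, one_smul] at c
    have hv1 : e j + e k + (e i + e k) = e i + e j := by
      have h : ∀ a b c : ZMod 2, b + c + (a + c) = a + b := by decide
      funext a; exact h _ _ _
    rw [hv1] at c
    rw [← c]
    exact InH.mul (InH.mul hD1 hD2) hD1

lemma InH_split {v x₀ y : Fin r → ZMod 2} (yon : Fin r → ZMod 2)
    (hon : InH v (T x₀ yon)) (hdot : yon ⬝ᵥ x₀ = 0)
    (hoffmem : ∀ m, (y + yon) m ≠ 0 → x₀ m = 0 ∧ InH v (T x₀ (e m))) :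
    InH v (T x₀ y) := by
  have hsplit : y = yon + (y + yon) := by
    funext a
    have h : ∀ p q : ZMod 2, q = p + (q + p) := by decide
    exact h _ _
  rw [hsplit, ← Ty_add _ _ _ hdot]
  exact InH.mul hon (InH_offpart _ _ le_rfl hoffmem)

lemma InH_AL1 {v y : Fin r → ZMod 2} {a : Fin r} (hva : v a = 0) (hya : y a = 0) :
    InH v (T (e a) y) := by
  apply InH_offpart _ _ le_rfl
  intro m hm
  have hma : m ≠ a := fun h => hm (by rw [h, hya])
  exact ⟨by rw [e_app]; simp [hma], InH_X (Ne.symm hma) hva⟩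

lemma InH_AL2 {v y : Fin r → ZMod 2} {i j : Fin r} (hij : i ≠ j)
    (hvi : v i = 0) (hvj : v j = 0) (hy : y i = y j) : InH v (T (e i + e j) y) := by
  apply InH_split (y i • (e i + e j))
  · rcases (by decide : ∀ a : ZMod 2, a = 0 ∨ a = 1) (y i) with h | h
    · rw [h, zero_smul, T_zero_right]; exact InH.one
    · rw [h, one_smul]; exact InH_swap_free hij hvi hvj
  · rw [smul_dotProduct, add_dotProduct, e_dot, e_dot]
    simp [e_app, hij, hij.symm, z2]
  · intro m hm
    have hmi : m ≠ i := by
      rintro rfl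
      apply hm
      simp [e_app, hij, hij.symm, z2]
    have hmj : m ≠ j := by
      rintro rfl
      apply hm
      simp [e_app, hij, hij.symm, hy, z2]
    have hym : y m ≠ 0 := by
      intro h
      apply hm
      simp [e_app, hmi, hmj, h]
    refine ⟨by simp [e_app, hmi, hmj], ?_⟩
    rw [← Tx_add _ _ _ (by rw [e_dot, e_app]; simp [hmj])]
    exact InH.mul (InH_X (Ne.symm hmi) hvi) (InH_X (Ne.symm hmj) hvj)

lemma InH_AL34 (hr : 3 ≤ r) {v y : Fin r → ZMod 2} {i j : Fin r} (hij : i ≠ j)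
    (hvi : v i = 1) (hvj : v j = 1) (hy : y i = y j) : InH v (T (e i + e j) y) := by
  apply InH_split (y i • (e i + e j))
  · rcases (by decide : ∀ a : ZMod 2, a = 0 ∨ a = 1) (y i) with h | h
    · rw [h, zero_smul, T_zero_right]; exact InH.one
    · rw [h, one_smul]; exact InH_swap_pinned hr hij hvi hvj
  · rw [smul_dotProduct, add_dotProduct, e_dot, e_dot]
    simp [e_app, hij, hij.symm, z2]
  · intro m hm
    have hmi : m ≠ i := by
      rintro rfl
      apply hm
      simp [e_app, hij, hij.symm, z2]
    have hmj : m ≠ j := by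
      rintro rfl
      apply hm
      simp [e_app, hij, hij.symm, hy, z2]
    have hym : y m ≠ 0 := by
      intro h
      apply hm
      simp [e_app, hmi, hmj, h]
    exact ⟨by simp [e_app, hmi, hmj], InH_D hij (Ne.symm hmi) (Ne.symm hmj) hvi hvj⟩

lemma InH_AL5 {v y : Fin r → ZMod 2} {a b c : Fin r} (hab : a ≠ b) (hac : a ≠ c) (hbc : b ≠ c)
    (hva : v a = 0) (hvb : v b = 1) (hvc : v c = 1)
    (hya : y a = 1) (hyb : y b = 0) (hyc : y c = 1) :
    InH v (T (e a + e b + e c) y) := by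
  have hassoc : e a + e b + e c = e a + (e b + e c) := add_assoc _ _ _
  apply InH_split (e a + e c)
  · -- on-part: conjugate of D_{bc,a} by X_{ac}
    have key := conj_T (e a) (e c) (e b + e c) (e a)
      (by rw [e_dot]; simp [e_app, hac, hac.symm])
    have h1 : e c ⬝ᵥ (e b + e c) = 1 := by
      rw [e_dot]; simp [e_app, hbc, hbc.symm]
    have h2 : e a ⬝ᵥ e a = 1 := by rw [e_dot, e_app_self]
    rw [h1, h2, one_smul, one_smul] at key
    have hx : e b + e c + e a = e a + e b + e c := by abel
    rw [hx] at key
    rw [← key]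
    exact InH.mul (InH.mul (InH_X hac hva) (InH_D hbc (Ne.symm hab) (Ne.symm hac) hvb hvc))
      (InH_X hac hva)
  · rw [add_dotProduct, e_dot, e_dot]
    simp [e_app, hab, hab.symm, hac, hac.symm, hbc, hbc.symm, z2]
  · intro m hm
    have hma : m ≠ a := by
      rintro rfl
      apply hm
      simp [e_app, hab, hab.symm, hac, hac.symm, hbc, hbc.symm, hya, hyb, hyc, z2]
    have hmb : m ≠ b := by
      rintro rfl
      apply hm
      simp [e_app, hab, hab.symm, hac, hac.symm, hbc, hbc.symm, hya, hyb, hyc, z2]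
    have hmc : m ≠ c := by
      rintro rfl
      apply hm
      simp [e_app, hab, hab.symm, hac, hac.symm, hbc, hbc.symm, hya, hyb, hyc, z2]
    refine ⟨by simp [e_app, hma, hmb, hmc], ?_⟩
    rw [hassoc, ← Tx_add _ _ _ (by rw [e_dot]; simp [e_app, hmb, hmc])]
    exact InH.mul (InH_X (Ne.symm hma) hva)
      (InH_D hbc (Ne.symm hmb) (Ne.symm hmc) hvb hvc)

lemma zm_cases (a : ZMod 2) : a = 0 ∨ a = 1 := by revert a; decide

lemma dot_eq_card {x w : Fin r → ZMod 2} :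
    w ⬝ᵥ x = (((Finset.univ.filter fun m => x m ≠ 0).filter fun m => w m = 1).card : ZMod 2) := by
  rw [dotProduct]
  have hsplit := Finset.sum_filter_add_sum_filter_not Finset.univ
    (fun m => x m ≠ 0 ∧ w m = 1) (fun m => w m * x m)
  have h1 : (Finset.univ.filter (fun m => x m ≠ 0 ∧ w m = 1)).sum (fun m => w m * x m)
      = (Finset.univ.filter (fun m => x m ≠ 0 ∧ w m = 1)).card • (1 : ZMod 2) := by
    rw [Finset.sum_congr rfl (fun m hm => ?_), Finset.sum_const]
    simp only [Finset.mem_filter] at hm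
    rw [hm.2.2, z2' hm.2.1, one_mul]
  have h2 : (Finset.univ.filter (fun m => ¬(x m ≠ 0 ∧ w m = 1))).sum (fun m => w m * x m)
      = 0 := by
    apply Finset.sum_eq_zero
    intro m hm
    simp only [Finset.mem_filter] at hm
    by_cases hx : x m = 0
    · rw [hx, mul_zero]
    · rcases zm_cases (w m) with h | h
      · rw [h, zero_mul]
      · exact absurd ⟨hx, h⟩ hm.2
  rw [← hsplit, h1, h2, add_zero, Finset.filter_filter, nsmul_eq_mul, mul_one]

lemma InH_T_main (hr : 3 ≤ r) (v : Fin r → ZMod 2) :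
    ∀ n (x y : Fin r → ZMod 2), (Finset.univ.filter fun m => x m ≠ 0).card ≤ n →
    y ⬝ᵥ x = 0 → v ⬝ᵥ x = 0 → InH v (T x y) := by
  intro n
  induction n with
  | zero =>
    intro x y hcard _ _
    have hx0 : x = 0 := by
      funext m
      show x m = 0
      by_contra hm
      have : m ∈ Finset.univ.filter fun m => x m ≠ 0 := by simp [hm]
      have := Finset.card_pos.mpr ⟨m, this⟩
      omega
    rw [hx0, T_zero_left]; exact InH.one
  | succ n IH =>
    intro x y hcard hyx hvx
    by_cases h0 : x = 0
    · rw [h0, T_zero_left]; exact InH.one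
    set sx := Finset.univ.filter (fun m => x m ≠ 0) with hsx
    -- peeling a single coordinate
    by_cases hA : ∃ a, x a ≠ 0 ∧ v a = 0 ∧ y a = 0
    · obtain ⟨a, hxa, hva, hya⟩ := hA
      set x' := Function.update x a 0 with hx'
      have hsplit : x = e a + x' := by
        funext m
        by_cases hm : m = a
        · subst hm; simp [hx', e_app_self, z2' hxa]
        · simp [hx', e_app, hm, Function.update_of_ne hm]
      have hdoty : y ⬝ᵥ x' = 0 := by
        have : y ⬝ᵥ x = y ⬝ᵥ e a + y ⬝ᵥ x' := by rw [hsplit, dotProduct_add]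
        rw [hyx, dot_e, hya, zero_add] at this
        exact this.symm
      have hdotv : v ⬝ᵥ x' = 0 := by
        have : v ⬝ᵥ x = v ⬝ᵥ e a + v ⬝ᵥ x' := by rw [hsplit, dotProduct_add]
        rw [hvx, dot_e, hva, zero_add] at this
        exact this.symm
      have hcard' : (Finset.univ.filter fun m => x' m ≠ 0).card ≤ n := by
        have hfil : (Finset.univ.filter fun m => x' m ≠ 0) = sx.erase a := by
          ext m
          by_cases hm : m = a
          · subst hm; simp [hx']
          · simp [hx', Function.update_of_ne hm, hm, hsx]
        rw [hfil]
        have hmem : a ∈ sx := by simp [hsx, hxa]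
        have := Finset.card_erase_of_mem hmem
        omega
      rw [hsplit, ← Tx_add _ _ _ hdoty]
      exact InH.mul (InH_AL1 hva hya) (IH x' y hcard' hdoty hdotv)
    -- peeling a pair with equal class
    · by_cases hB : ∃ i j, i ≠ j ∧ x i ≠ 0 ∧ x j ≠ 0 ∧ v i = v j ∧ y i = y j
      · obtain ⟨i, j, hij, hxi, hxj, hvij, hyij⟩ := hB
        set x' := Function.update (Function.update x i 0) j 0 with hx'
        have hsplit : x = (e i + e j) + x' := by
          funext m
          by_cases hmi : m = i
          · subst hmi
            simp [hx', e_app, hij, hij.symm, Function.update_of_ne hij,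
              Function.update_self, z2' hxi]
          · by_cases hmj : m = j
            · subst hmj
              simp [hx', e_app, hij, hij.symm, z2' hxj]
            · simp [hx', e_app, hmi, hmj, Function.update_of_ne hmi,
                Function.update_of_ne hmj]
        have hpairy : y ⬝ᵥ (e i + e j) = 0 := by
          rw [dotProduct_add, dot_e, dot_e, hyij, z2]
        have hpairv : v ⬝ᵥ (e i + e j) = 0 := by
          rw [dotProduct_add, dot_e, dot_e, hvij, z2]
        have hdoty : y ⬝ᵥ x' = 0 := by
          have : y ⬝ᵥ x = y ⬝ᵥ (e i + e j) + y ⬝ᵥ x' := by rw [hsplit, dotProduct_add]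
          rw [hyx, hpairy, zero_add] at this
          exact this.symm
        have hdotv : v ⬝ᵥ x' = 0 := by
          have : v ⬝ᵥ x = v ⬝ᵥ (e i + e j) + v ⬝ᵥ x' := by rw [hsplit, dotProduct_add]
          rw [hvx, hpairv, zero_add] at this
          exact this.symm
        have hcard' : (Finset.univ.filter fun m => x' m ≠ 0).card ≤ n := by
          have hfil : (Finset.univ.filter fun m => x' m ≠ 0) = (sx.erase i).erase j := by
            ext m
            by_cases hmi : m = i
            · subst hmi; simp [hx', Function.update_of_ne hij, hij, hij.symm]
            · by_cases hmj : m = j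
              · subst hmj; simp [hx']
              · simp [hx', Function.update_of_ne hmi, Function.update_of_ne hmj,
                  hmi, hmj, hsx]
          rw [hfil]
          have hmemj : j ∈ sx.erase i := by simp [hsx, hxj, hij.symm]
          have h1 := Finset.card_erase_of_mem hmemj
          have hmemi : i ∈ sx := by simp [hsx, hxi]
          have h2 := Finset.card_erase_of_mem hmemi
          omega
        have hpair : InH v (T (e i + e j) y) := by
          rcases zm_cases (v i) with h | h
          · exact InH_AL2 hij h (hvij ▸ h) hyij
          · exact InH_AL34 hr hij h (hvij ▸ h) hyij
        rw [hsplit, ← Tx_add _ _ _ hdoty]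
        exact InH.mul hpair (IH x' y hcard' hdoty hdotv)
      -- the triple case
      · push_neg at hA hB
        set t01 := sx.filter (fun m => v m = 0 ∧ y m = 1) with ht01
        set t10 := sx.filter (fun m => v m = 1 ∧ y m = 0) with ht10
        set t11 := sx.filter (fun m => v m = 1 ∧ y m = 1) with ht11
        have hclass : ∀ m ∈ sx, (v m = 0 ∧ y m = 1) ∨ (v m = 1 ∧ y m = 0) ∨
            (v m = 1 ∧ y m = 1) := by
          intro m hm
          simp only [hsx, Finset.mem_filter] at hm
          rcases zm_cases (v m) with h | h
          · rcases zm_cases (y m) with h' | h'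
            · exact absurd h' (hA m hm.2 h)
            · exact Or.inl ⟨h, h'⟩
          · rcases zm_cases (y m) with h' | h'
            · exact Or.inr (Or.inl ⟨h, h'⟩)
            · exact Or.inr (Or.inr ⟨h, h'⟩)
        have hcard1 : ∀ t : Finset (Fin r), (∀ m ∈ t, x m ≠ 0) →
            (∀ m ∈ t, ∀ m' ∈ t, v m = v m' ∧ y m = y m') → t.card ≤ 1 := by
          intro t hxt hct
          refine Finset.card_le_one.mpr (fun a ha b hb => ?_)
          by_contra hab
          exact hB a b hab (hxt a ha) (hxt b hb) (hct a ha b hb).1 (hct a ha b hb).2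
        have hc01 : t01.card ≤ 1 := by
          apply hcard1
          · intro m hm; simp only [ht01, hsx, Finset.mem_filter] at hm; exact hm.1.2
          · intro m hm m' hm'
            simp only [ht01, Finset.mem_filter] at hm hm'
            rw [hm.2.1, hm'.2.1, hm.2.2, hm'.2.2]; exact ⟨rfl, rfl⟩
        have hc10 : t10.card ≤ 1 := by
          apply hcard1
          · intro m hm; simp only [ht10, hsx, Finset.mem_filter] at hm; exact hm.1.2
          · intro m hm m' hm'
            simp only [ht10, Finset.mem_filter] at hm hm'
            rw [hm.2.1, hm'.2.1, hm.2.2, hm'.2.2]; exact ⟨rfl, rfl⟩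
        have hc11 : t11.card ≤ 1 := by
          apply hcard1
          · intro m hm; simp only [ht11, hsx, Finset.mem_filter] at hm; exact hm.1.2
          · intro m hm m' hm'
            simp only [ht11, Finset.mem_filter] at hm hm'
            rw [hm.2.1, hm'.2.1, hm.2.2, hm'.2.2]; exact ⟨rfl, rfl⟩
        -- y ⬝ᵥ x = card (t01 ∪ t11), v ⬝ᵥ x = card (t10 ∪ t11)
        have hyfil : sx.filter (fun m => y m = 1) = t01 ∪ t11 := by
          ext m
          simp only [ht01, ht11, Finset.mem_union, Finset.mem_filter]
          constructor
          · rintro ⟨hm, hy1⟩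
            rcases hclass m hm with h | h | h
            · exact Or.inl ⟨hm, h⟩
            · rw [h.2] at hy1; exact absurd hy1 (by decide)
            · exact Or.inr ⟨hm, h⟩
          · rintro (⟨hm, h⟩ | ⟨hm, h⟩) <;> exact ⟨hm, h.2⟩
        have hvfil : sx.filter (fun m => v m = 1) = t10 ∪ t11 := by
          ext m
          simp only [ht10, ht11, Finset.mem_union, Finset.mem_filter]
          constructor
          · rintro ⟨hm, hv1⟩
            rcases hclass m hm with h | h | h
            · rw [h.1] at hv1; exact absurd hv1 (by decide)
            · exact Or.inl ⟨hm, h⟩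
            · exact Or.inr ⟨hm, h⟩
          · rintro (⟨hm, h⟩ | ⟨hm, h⟩) <;> exact ⟨hm, h.1⟩
        have hdisj1 : Disjoint t01 t11 := by
          rw [Finset.disjoint_left]
          intro m hm hm'
          simp only [ht01, ht11, Finset.mem_filter] at hm hm'
          rw [hm.2.1] at hm'
          exact absurd hm'.2.1 (by decide)
        have hdisj2 : Disjoint t10 t11 := by
          rw [Finset.disjoint_left]
          intro m hm hm'
          simp only [ht10, ht11, Finset.mem_filter] at hm hm'
          rw [hm.2.2] at hm'
          exact absurd hm'.2.2 (by decide)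
        have hysum : ((t01.card + t11.card : ℕ) : ZMod 2) = 0 := by
          have := dot_eq_card (x := x) (w := y)
          rw [hyx] at this
          rw [← Finset.card_union_of_disjoint hdisj1, ← hyfil]
          exact this.symm
        have hvsum : ((t10.card + t11.card : ℕ) : ZMod 2) = 0 := by
          have := dot_eq_card (x := x) (w := v)
          rw [hvx] at this
          rw [← Finset.card_union_of_disjoint hdisj2, ← hvfil]
          exact this.symm
        -- sx is the union of the three classes
        have hunion : sx = t01 ∪ t10 ∪ t11 := by
          ext m
          simp only [ht01, ht10, ht11, Finset.mem_union, Finset.mem_filter]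
          constructor
          · intro hm
            rcases hclass m hm with h | h | h
            · exact Or.inl (Or.inl ⟨hm, h⟩)
            · exact Or.inl (Or.inr ⟨hm, h⟩)
            · exact Or.inr ⟨hm, h⟩
          · rintro ((⟨hm, _⟩ | ⟨hm, _⟩) | ⟨hm, _⟩) <;> exact hm
        have hne : sx.Nonempty := by
          obtain ⟨m, hm⟩ := Function.ne_iff.mp h0
          exact ⟨m, by simp [hsx]; simpa using hm⟩
        -- all three cards are 1
        have hcards : t01.card = 1 ∧ t10.card = 1 ∧ t11.card = 1 := by
          rcases Nat.le_one_iff_eq_zero_or_eq_one.mp hc01 with h1 | h1 <;>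
          rcases Nat.le_one_iff_eq_zero_or_eq_one.mp hc10 with h2 | h2 <;>
          rcases Nat.le_one_iff_eq_zero_or_eq_one.mp hc11 with h3 | h3 <;>
            rw [h1, h3] at hysum <;> rw [h2, h3] at hvsum <;>
            first
              | (exact ⟨h1, h2, h3⟩)
              | (exact absurd hysum (by decide))
              | (exact absurd hvsum (by decide))
              | · exfalso
                  obtain ⟨m, hm⟩ := hne
                  rw [hunion] at hm
                  simp only [Finset.mem_union] at hm
                  rcases hm with (hm | hm) | hm
                  · rw [Finset.card_eq_zero.mp h1] at hm; exact absurd hm (Finset.notMem_empty m)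
                  · rw [Finset.card_eq_zero.mp h2] at hm; exact absurd hm (Finset.notMem_empty m)
                  · rw [Finset.card_eq_zero.mp h3] at hm; exact absurd hm (Finset.notMem_empty m)
        obtain ⟨a, ha⟩ := Finset.card_eq_one.mp hcards.1
        obtain ⟨b, hb⟩ := Finset.card_eq_one.mp hcards.2.1
        obtain ⟨c, hc⟩ := Finset.card_eq_one.mp hcards.2.2
        have hamem : a ∈ t01 := by rw [ha]; exact Finset.mem_singleton_self a
        have hbmem : b ∈ t10 := by rw [hb]; exact Finset.mem_singleton_self b
        have hcmem : c ∈ t11 := by rw [hc]; exact Finset.mem_singleton_self c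
        simp only [ht01, ht10, ht11, Finset.mem_filter] at hamem hbmem hcmem
        have hab : a ≠ b := by
          rintro rfl
          rw [hamem.2.1] at hbmem
          exact absurd hbmem.2.1 (by decide)
        have hac : a ≠ c := by
          rintro rfl
          rw [hamem.2.1] at hcmem
          exact absurd hcmem.2.1 (by decide)
        have hbc : b ≠ c := by
          rintro rfl
          rw [hbmem.2.2] at hcmem
          exact absurd hcmem.2.2 (by decide)
        have hxeq : x = e a + e b + e c := by
          funext m
          by_cases hm : x m = 0
          · have hma : m ≠ a := by rintro rfl; exact (by simpa [hsx] using hamem.1 : x m ≠ 0) hm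
            have hmb : m ≠ b := by rintro rfl; exact (by simpa [hsx] using hbmem.1 : x m ≠ 0) hm
            have hmc : m ≠ c := by rintro rfl; exact (by simpa [hsx] using hcmem.1 : x m ≠ 0) hm
            simp [hm, e_app, hma, hmb, hmc]
          · have hmsx : m ∈ sx := by simp [hsx, hm]
            rw [hunion] at hmsx
            simp only [Finset.mem_union] at hmsx
            rcases hmsx with (hmm | hmm) | hmm
            · rw [ha, Finset.mem_singleton] at hmm
              subst hmm
              simp [z2' hm, e_app, hab, hac]
            · rw [hb, Finset.mem_singleton] at hmm
              subst hmm
              simp [z2' hm, e_app, hab.symm, hbc]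
            · rw [hc, Finset.mem_singleton] at hmm
              subst hmm
              simp [z2' hm, e_app, hac.symm, hbc.symm]
        rw [hxeq]
        exact InH_AL5 hab hac hbc hamem.2.1 hbmem.2.1 hcmem.2.1
          hamem.2.2 hbmem.2.2 hcmem.2.2

lemma X_coe {i j : Fin r} (hij : i ≠ j) :
    (((X i j hij).toGL : GL (Fin r) (ZMod 2)) : Matrix (Fin r) (Fin r) (ZMod 2))
      = T (e i) (e j) := by
  show Matrix.transvection i j 1 = _
  rw [Matrix.transvection, T, single_eq_single_vecMulVec_single, e, e]

lemma XX_coe {i j k : Fin r} (hik : i ≠ k) (hjk : j ≠ k) :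
    (((X i k hik * X j k hjk).toGL : GL (Fin r) (ZMod 2)) :
      Matrix (Fin r) (Fin r) (ZMod 2)) = T (e i + e j) (e k) := by
  show ((X i k hik * X j k hjk : Matrix.SpecialLinearGroup (Fin r) (ZMod 2)) :
    Matrix (Fin r) (Fin r) (ZMod 2)) = _
  rw [Matrix.SpecialLinearGroup.coe_mul]
  show Matrix.transvection i k 1 * Matrix.transvection j k 1 = _
  have h1 : Matrix.transvection i k (1 : ZMod 2) = T (e i) (e k) := by
    rw [Matrix.transvection, T, single_eq_single_vecMulVec_single, e, e]
  have h2 : Matrix.transvection j k (1 : ZMod 2) = T (e j) (e k) := by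
    rw [Matrix.transvection, T, single_eq_single_vecMulVec_single, e, e]
  rw [h1, h2, Tx_add _ _ _ (by rw [e_dot, e_app]; simp [hjk.symm])]

lemma mem_S {v : Fin r → ZMod 2} {M : GL (Fin r) (ZMod 2)} :
    M ∈ S v ↔ Matrix.vecMul v (M : Matrix (Fin r) (Fin r) (ZMod 2)) = v := Iff.rfl

lemma H_le_S (v : Fin r → ZMod 2) : H v ≤ S v := by
  rw [H, Subgroup.closure_le]
  rintro A (⟨i, j, hij, hv, rfl⟩ | ⟨i, j, k, hik, hjk, hij, hvi, hvj, rfl⟩) <;>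
    simp only [SetLike.mem_coe, mem_S]
  · rw [X_coe, vecMul_T, dot_e, hv, zero_smul, add_zero]
  · rw [XX_coe, vecMul_T, dotProduct_add, dot_e, dot_e, hvi, hvj, z2, zero_smul, add_zero]

lemma zm_unit {a : ZMod 2} (h : IsUnit a) : a = 1 := by
  rcases zm_cases a with h0 | h1
  · rw [h0] at h
    exact absurd h not_isUnit_zero
  · exact h1

lemma S_le_H_of_zero (v : Fin r → ZMod 2) (hv : v = 0) : S v ≤ H v := by
  intro M _
  have hdet : (M : Matrix (Fin r) (Fin r) (ZMod 2)).det ≠ 0 := by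
    have : IsUnit (M : Matrix (Fin r) (Fin r) (ZMod 2)) := ⟨M, rfl⟩
    exact ((Matrix.isUnit_iff_isUnit_det _).mp this).ne_zero
  have main := Matrix.diagonal_transvection_induction
    (fun A => ∀ U : GL (Fin r) (ZMod 2),
      (U : Matrix (Fin r) (Fin r) (ZMod 2)) = A → U ∈ H v)
    (M : Matrix (Fin r) (Fin r) (ZMod 2))
    ?_ ?_ ?_
  · exact main M rfl
  · -- diagonal
    intro D hD U hU
    have hD1 : Matrix.diagonal D = 1 := by
      have hdet' : (Matrix.diagonal D).det ≠ 0 := by rw [hD]; exact hdet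
      rw [Matrix.det_diagonal] at hdet'
      have : ∀ i, D i = 1 := by
        intro i
        rcases zm_cases (D i) with h | h
        · exfalso
          exact hdet' (Finset.prod_eq_zero (Finset.mem_univ i) h)
        · exact h
      have : D = fun _ => 1 := funext this
      rw [this, Matrix.diagonal_one]
    rw [hD1] at hU
    have : U = 1 := Units.ext hU
    rw [this]
    exact one_mem _
  · -- transvection
    rintro ⟨i, j, hij, c⟩ U hU
    rw [Matrix.TransvectionStruct.toMatrix_mk] at hU
    rcases zm_cases c with h | h
    · rw [h, Matrix.transvection_zero] at hU
      have : U = 1 := Units.ext hU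
      rw [this]; exact one_mem _
    · subst h
      have : U = (X i j hij).toGL := Units.ext hU
      rw [this]
      exact Subgroup.subset_closure (Or.inl ⟨i, j, hij, by rw [hv]; rfl, rfl⟩)
  · -- product
    intro A B hA hB U hU
    have hdetAB : IsUnit (A * B).det := by
      rw [← hU]
      exact (Matrix.isUnit_iff_isUnit_det _).mp ⟨U, rfl⟩
    rw [Matrix.det_mul] at hdetAB
    have hdA : IsUnit A.det := isUnit_of_mul_isUnit_left hdetAB
    have hdB : IsUnit B.det := isUnit_of_mul_isUnit_right hdetAB
    have hA' : IsUnit A := (Matrix.isUnit_iff_isUnit_det _).mpr hdA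
    have hB' : IsUnit B := (Matrix.isUnit_iff_isUnit_det _).mpr hdB
    have hUAB : U = hA'.unit * hB'.unit := by
      apply Units.ext
      rw [hU, Units.val_mul, hA'.unit_spec, hB'.unit_spec]
    rw [hUAB]
    exact mul_mem (hA hA'.unit hA'.unit_spec) (hB hB'.unit hB'.unit_spec)

section Parabolic

variable (p : Fin r)

lemma sum_split (f : Fin r → ZMod 2) :
    ∑ k, f k = f p + ∑ k : {i : Fin r // i ≠ p}, f ↑k := by
  rw [← Finset.sum_subtype (Finset.univ.erase p)
    (fun x => by simp [Finset.mem_erase]) f]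
  exact (Finset.add_sum_erase Finset.univ f (Finset.mem_univ p)).symm

def emb (A : Matrix {i : Fin r // i ≠ p} {i : Fin r // i ≠ p} (ZMod 2)) :
    Matrix (Fin r) (Fin r) (ZMod 2) :=
  Matrix.of fun a b =>
    if ha : a = p then (if b = p then 1 else 0)
    else if hb : b = p then 0 else A ⟨a, ha⟩ ⟨b, hb⟩

lemma emb_apply_ne {A : Matrix {i : Fin r // i ≠ p} {i : Fin r // i ≠ p} (ZMod 2)}
    {a b : Fin r} (ha : a ≠ p) (hb : b ≠ p) : emb p A a b = A ⟨a, ha⟩ ⟨b, hb⟩ := by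
  simp [emb, ha, hb]

lemma emb_mul (A B : Matrix {i : Fin r // i ≠ p} {i : Fin r // i ≠ p} (ZMod 2)) :
    emb p (A * B) = emb p A * emb p B := by
  ext a b
  rw [Matrix.mul_apply, sum_split p]
  by_cases ha : a = p
  · have hL : emb p (A * B) a b = if b = p then 1 else 0 := by simp [emb, ha]
    have h1 : emb p A a p = 1 := by simp [emb, ha]
    have h2 : emb p B p b = if b = p then 1 else 0 := by simp [emb]
    have h3 : ∀ k : {i : Fin r // i ≠ p}, emb p A a ↑k * emb p B ↑k b = 0 := by
      intro k
      have : emb p A a ↑k = 0 := by simp [emb, ha, k.prop]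
      rw [this, zero_mul]
    rw [hL, h1, h2, one_mul, Finset.sum_eq_zero (fun k _ => h3 k), add_zero]
  · by_cases hb : b = p
    · have hL : emb p (A * B) a b = 0 := by simp [emb, ha, hb]
      have h1 : emb p A a p = 0 := by simp [emb, ha]
      have h3 : ∀ k : {i : Fin r // i ≠ p}, emb p A a ↑k * emb p B ↑k b = 0 := by
        intro k
        have : emb p B ↑k b = 0 := by simp [emb, hb, k.prop]
        rw [this, mul_zero]
      rw [hL, h1, zero_mul, Finset.sum_eq_zero (fun k _ => h3 k), add_zero]
    · rw [emb_apply_ne p ha hb, Matrix.mul_apply]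
      have hterm : emb p A a p * emb p B p b = 0 := by
        have : emb p A a p = 0 := by simp [emb, ha]
        rw [this, zero_mul]
      rw [hterm, zero_add]
      apply Finset.sum_congr rfl
      intro k _
      rw [emb_apply_ne p ha k.prop, emb_apply_ne p k.prop hb]

lemma emb_transvection (i j : {i : Fin r // i ≠ p}) (hij : i ≠ j) :
    emb p (Matrix.transvection i j (1 : ZMod 2)) =
      T (e (i : Fin r)) (e (j : Fin r)) := by
  ext a b
  have hTapp : T (e (i : Fin r)) (e (j : Fin r)) a b
      = (if a = b then 1 else 0)
        + (if a = ↑i then 1 else 0) * (if b = ↑j then 1 else 0) := by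
    rw [T, Matrix.add_apply, vecMulVec_apply, e_app, e_app, Matrix.one_apply]
  rw [hTapp]
  by_cases ha : a = p
  · have hai : a ≠ ↑i := fun h => i.prop (ha ▸ h.symm)
    have hL : emb p (Matrix.transvection i j (1 : ZMod 2)) a b
        = if b = p then 1 else 0 := by simp [emb, ha]
    rw [hL, if_neg hai, zero_mul, add_zero, ha]
    by_cases hb : b = p
    · rw [if_pos hb, if_pos hb.symm]
    · rw [if_neg hb, if_neg (fun h : p = b => hb h.symm)]
  · by_cases hb : b = p
    · have hbj : b ≠ ↑j := fun h => j.prop (hb ▸ h.symm)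
      have hL : emb p (Matrix.transvection i j (1 : ZMod 2)) a b = 0 := by
        simp [emb, ha, hb]
      rw [hL, if_neg hbj, mul_zero, add_zero,
        if_neg (fun h : a = b => ha (h.trans hb))]
    · rw [emb_apply_ne p ha hb, Matrix.transvection, Matrix.add_apply,
        Matrix.one_apply, Matrix.single]
      have h1 : ((⟨a, ha⟩ : {i : Fin r // i ≠ p}) = ⟨b, hb⟩) ↔ a = b := by
        simp [Subtype.ext_iff]
      have h2 : (i = (⟨a, ha⟩ : {i : Fin r // i ≠ p})) ↔ a = ↑i := by
        constructor
        · intro h; rw [h]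
        · intro h; exact Subtype.ext h.symm
      have h3 : (j = (⟨b, hb⟩ : {i : Fin r // i ≠ p})) ↔ b = ↑j := by
        constructor
        · intro h; rw [h]
        · intro h; exact Subtype.ext h.symm
      simp only [Matrix.of_apply, h1, h2, h3]
      split_ifs <;> simp_all

end Parabolic

lemma emb_one (p : Fin r) : emb p (1 : Matrix {i : Fin r // i ≠ p} {i : Fin r // i ≠ p} (ZMod 2)) = 1 := by
  ext a b
  by_cases ha : a = p
  · by_cases hb : b = p
    · have h1 : emb p 1 a b = 1 := by simp [emb, ha, hb]
      rw [h1, Matrix.one_apply, if_pos (ha.trans hb.symm)]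
    · have h1 : emb p 1 a b = 0 := by simp [emb, ha, hb]
      rw [h1, Matrix.one_apply, if_neg (fun h : a = b => hb (h.symm.trans ha))]
  · by_cases hb : b = p
    · have h1 : emb p 1 a b = 0 := by simp [emb, ha, hb]
      rw [h1, Matrix.one_apply, if_neg (fun h : a = b => ha (h.trans hb))]
    · rw [emb_apply_ne p ha hb, Matrix.one_apply, Matrix.one_apply]
      have : ((⟨a, ha⟩ : {i : Fin r // i ≠ p}) = ⟨b, hb⟩) ↔ a = b := by
        simp [Subtype.ext_iff]
      rw [if_congr this rfl rfl]

lemma S_le_H_of_ne (hr : 3 ≤ r) (v : Fin r → ZMod 2) (hv : v ≠ 0) : S v ≤ H v := by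
  obtain ⟨p, hp⟩ := Function.ne_iff.mp hv
  simp only [Pi.zero_apply] at hp
  have hvp : v p = 1 := z2' hp
  intro M hM
  rw [mem_S] at hM
  set g : Matrix (Fin r) (Fin r) (ZMod 2) := T (e p) (v + e p) with hgdef
  have hgdot : (v + e p) ⬝ᵥ e p = 0 := by
    rw [dot_e, Pi.add_apply, e_app_self, hvp]
    decide
  have hg2 : g * g = 1 := T_sq _ _ hgdot
  have hepg : e p ᵥ* g = v := by
    rw [hgdef, vecMul_T, e_dot, e_app_self, one_smul]
    funext a
    exact (by decide : ∀ x y : ZMod 2, x + (y + x) = y) _ _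
  have hvg : v ᵥ* g = e p := by
    rw [hgdef, vecMul_T, dot_e, hvp, one_smul]
    funext a
    exact (by decide : ∀ x y : ZMod 2, x + (x + y) = y) _ _
  set N : Matrix (Fin r) (Fin r) (ZMod 2) := g * (M : Matrix (Fin r) (Fin r) (ZMod 2)) * g
    with hNdef
  have hrowN : e p ᵥ* N = e p := by
    rw [hNdef, ← Matrix.vecMul_vecMul, ← Matrix.vecMul_vecMul, hepg, hM, hvg]
  have hNpb : ∀ b, N p b = e p b := by
    have h := hrowN
    rw [e, Matrix.single_one_vecMul] at h
    exact fun b => congrFun h b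
  set x : Fin r → ZMod 2 := fun i => if i = p then 0 else N i p with hxdef
  have hxp : x p = 0 := by simp [hxdef]
  have hdotx : e p ⬝ᵥ x = 0 := by rw [e_dot]; exact hxp
  set C : Matrix (Fin r) (Fin r) (ZMod 2) := T x (e p) with hCdef
  have hC2 : C * C = 1 := T_sq _ _ hdotx
  set N'' : Matrix (Fin r) (Fin r) (ZMod 2) := C * N with hN''def
  have hN''eq : N'' = N + vecMulVec x (e p) := by
    rw [hN''def, hCdef, T, add_mul, one_mul, vMV_mul, hrowN]
  have hN''row : ∀ b, N'' p b = e p b := by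
    intro b
    rw [hN''eq, Matrix.add_apply, vecMulVec_apply, hxp, zero_mul, add_zero, hNpb]
  have hN''col : ∀ a, a ≠ p → N'' a p = 0 := by
    intro a hap
    rw [hN''eq, Matrix.add_apply, vecMulVec_apply, e_app_self, mul_one]
    simp [hxdef, hap, z2]
  have hN''pp : N'' p p = 1 := by rw [hN''row p, e_app_self]
  -- InH for the conjugate of C
  have hQC : InH v (g * C * g) := by
    have key := conj_T (e p) (v + e p) x (e p) hgdot
    have hy : e p + (e p ⬝ᵥ e p) • (v + e p) = v := by
      rw [e_dot, e_app_self, one_smul]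
      funext a
      exact (by decide : ∀ x y : ZMod 2, x + (y + x) = y) _ _
    have hxc : (v + e p) ⬝ᵥ x = v ⬝ᵥ x := by
      rw [add_dotProduct, e_dot, hxp, add_zero]
    rw [hy, hxc] at key
    rw [hgdef, hCdef, key]
    apply InH_T_main hr v _ _ v le_rfl
    · rw [dotProduct_add, dotProduct_smul, dot_e, hvp, smul_eq_mul, mul_one, z2]
    · rw [dotProduct_add, dotProduct_smul, dot_e, hvp, smul_eq_mul, mul_one, z2]
  -- units
  have hgu : IsUnit g := ⟨⟨g, g, hg2, hg2⟩, rfl⟩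
  have hNunit : IsUnit N := by
    rw [hNdef]
    exact (hgu.mul ⟨M, rfl⟩).mul hgu
  have hN''unit : IsUnit N'' := by
    rw [hN''def]
    exact IsUnit.mul (⟨⟨C, C, hC2, hC2⟩, rfl⟩ : IsUnit C) hNunit
  obtain ⟨W, hW⟩ := hN''unit
  set K : Matrix (Fin r) (Fin r) (ZMod 2) := ↑W⁻¹ with hKdef
  have hK1 : N'' * K = 1 := by rw [hKdef, ← hW, ← Units.val_mul, mul_inv_cancel, Units.val_one]
  have hK2 : K * N'' = 1 := by rw [hKdef, ← hW, ← Units.val_mul, inv_mul_cancel, Units.val_one]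
  set M' : Matrix {i : Fin r // i ≠ p} {i : Fin r // i ≠ p} (ZMod 2) :=
    Matrix.of (fun i' j' => N'' ↑i' ↑j') with hM'def
  set K' : Matrix {i : Fin r // i ≠ p} {i : Fin r // i ≠ p} (ZMod 2) :=
    Matrix.of (fun i' j' => K ↑i' ↑j') with hK'def
  have hM'K' : M' * K' = 1 := by
    ext i' j'
    rw [Matrix.mul_apply]
    have h : (N'' * K) (↑i' : Fin r) ↑j' = (1 : Matrix (Fin r) (Fin r) (ZMod 2)) ↑i' ↑j' := by
      rw [hK1]
    rw [Matrix.mul_apply, sum_split p, hN''col ↑i' i'.prop, zero_mul, zero_add] at h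
    have hsum : ∑ k : {i : Fin r // i ≠ p}, M' i' k * K' k j'
        = ∑ k : {i : Fin r // i ≠ p}, N'' ↑i' ↑k * K ↑k ↑j' := rfl
    rw [hsum, h, Matrix.one_apply, Matrix.one_apply]
    have : ((i' : Fin r) = ↑j') ↔ i' = j' := Subtype.coe_inj
    rw [if_congr this rfl rfl]
  have hdetM' : IsUnit M'.det := Matrix.isUnit_det_of_right_inverse hM'K'
  -- key conjugation-multiplicativity identity
  have key2 : ∀ A' B' : Matrix (Fin r) (Fin r) (ZMod 2),
      (g * A' * g) * (g * B' * g) = g * (A' * B') * g := by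
    intro A' B'
    have h1 : (g * A' * g) * (g * B' * g) = g * A' * (g * g) * (B' * g) := by
      simp only [Matrix.mul_assoc]
    rw [h1, hg2, mul_one]
    simp only [Matrix.mul_assoc]
  -- induction over the subtype matrix
  have main : IsUnit M'.det → InH v (g * emb p M' * g) := by
    apply Matrix.diagonal_transvection_induction
      (fun A => IsUnit A.det → InH v (g * emb p A * g)) M'
    · -- diagonal
      intro D _ hunit
      have hD1 : Matrix.diagonal D = 1 := by
        rw [Matrix.det_diagonal] at hunit
        have : ∀ i, D i = 1 := by
          intro i
          rcases zm_cases (D i) with h | h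
          · exfalso
            rw [Finset.prod_eq_zero (Finset.mem_univ i) h] at hunit
            exact not_isUnit_zero hunit
          · exact h
        rw [funext this, Matrix.diagonal_one]
      rw [hD1, emb_one, mul_one, hg2]
      exact InH.one
    · -- transvection
      rintro ⟨i, j, hij, c⟩ _
      rw [Matrix.TransvectionStruct.toMatrix_mk]
      rcases zm_cases c with h | h
      · rw [h, Matrix.transvection_zero, emb_one, mul_one, hg2]
        exact InH.one
      · rw [h, emb_transvection p i j hij]
        have key := conj_T (e p) (v + e p) (e (i : Fin r)) (e (j : Fin r)) hgdot
        have h1 : (v + e p) ⬝ᵥ e (i : Fin r) = v ↑i := by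
          rw [dot_e, Pi.add_apply, e_app, if_neg i.prop, add_zero]
        have h2 : e (j : Fin r) ⬝ᵥ e p = 0 := by
          rw [e_dot, e_app, if_neg j.prop]
        rw [h1, h2, zero_smul, add_zero] at key
        rw [hgdef, key]
        apply InH_T_main hr v _ _ (e (j : Fin r)) le_rfl
        · rw [dotProduct_add, dotProduct_smul, dot_e, dot_e, e_app, e_app]
          have hij' : ((i : Fin r) = ↑j) ↔ False :=
            iff_false_intro (fun hh => hij (Subtype.ext hh))
          have hpj : ((p : Fin r) = ↑j) ↔ False :=
            iff_false_intro (fun hh => j.prop hh.symm)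
          rw [if_congr hij' rfl rfl, if_congr hpj rfl rfl]
          simp
        · rw [dotProduct_add, dotProduct_smul, dot_e, dot_e, hvp, smul_eq_mul, mul_one, z2]
    · -- multiplication
      intro A B hA hB hdet
      rw [Matrix.det_mul] at hdet
      have hdA : IsUnit A.det := isUnit_of_mul_isUnit_left hdet
      have hdB : IsUnit B.det := isUnit_of_mul_isUnit_right hdet
      rw [emb_mul, ← key2]
      exact InH.mul (hA hdA) (hB hdB)
  have hembM' : emb p M' = N'' := by
    ext a b
    by_cases ha : a = p
    · have h : emb p M' a b = if b = p then 1 else 0 := by simp [emb, ha]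
      rw [h, ha, hN''row b, e_app]
    · by_cases hb : b = p
      · have h : emb p M' a b = 0 := by simp [emb, ha, hb]
        rw [h, hb, hN''col a ha]
      · rw [emb_apply_ne p ha hb]
        rfl
  have hQN'' : InH v (g * N'' * g) := by
    rw [← hembM']
    exact main hdetM'
  have hQN : InH v (g * N * g) := by
    have hNCN : N = C * N'' := by
      rw [hN''def, ← Matrix.mul_assoc, hC2, one_mul]
    rw [hNCN, ← key2]
    exact InH.mul hQC hQN''
  have hfinal : g * N * g = (M : Matrix (Fin r) (Fin r) (ZMod 2)) := by
    rw [hNdef]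
    have h1 : g * (g * (M : Matrix (Fin r) (Fin r) (ZMod 2)) * g) * g
        = (g * g) * (M : Matrix (Fin r) (Fin r) (ZMod 2)) * (g * g) := by
      simp only [Matrix.mul_assoc]
    rw [h1, hg2, one_mul, mul_one]
  rw [hfinal] at hQN
  obtain ⟨U, hU, hUM⟩ := hQN
  have hUM' : U = M := Units.ext hUM
  rwa [← hUM']

end StabAux

theorem stabilizer_generated_by_elementary_and_double_elementary
    (r : ℕ) (hr : 3 ≤ r) (v : Fin r → ZMod 2) :
    Subgroup.closure
      ({A | ∃ i j : Fin r, ∃ h : i ≠ j, v i = 0 ∧ A = (X i j h).toGL} ∪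
       {A | ∃ i j k : Fin r, ∃ hik : i ≠ k, ∃ hjk : j ≠ k, i ≠ j ∧ v i = 1 ∧ v j = 1 ∧
         A = (X i k hik * X j k hjk).toGL}) =
      S v := by
  apply le_antisymm
  · exact StabAux.H_le_S v
  · by_cases hv : v = 0
    · exact StabAux.S_le_H_of_zero v hv
    · exact StabAux.S_le_H_of_ne hr v hv
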